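/- Let G be a Polish group (a separable, completely metrizable topological group) and let A ⊆ G be a compact biter, i.e., for every compact set K ⊆ G there exist an open set U ⊆ G and elements g, h ∈ G such that U ∩ K ≠ ∅ and g·(U ∩ K)·h ⊆ A. Then A is not Haar null. -/

import Mathlib

open MeasureTheory

/-- Tightness: a probability measure on a Polish space gives positive mass to some
compact set. -/
lemma exists_isCompact_pos_measure {X : Type*} [TopologicalSpace X] [PolishSpace X]
    [MeasurableSpace X] [OpensMeasurableSpace X] (μ : Measure X) [IsProbabilityMeasure μ] :
    ∃ K : Set X, IsCompact K ∧ 0 < μ K := by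
  letI := TopologicalSpace.upgradeIsCompletelyMetrizable X
  have hne : Nonempty X := by
    by_contra h
    rw [not_nonempty_iff] at h
    have h1 := measure_univ (μ := μ)
    rw [Set.univ_eq_empty_iff.2 h, measure_empty] at h1
    exact one_ne_zero h1.symm
  obtain ⟨u, hu⟩ := TopologicalSpace.exists_dense_seq X
  -- closed sets `C n m`: union of the first `m+1` closed balls of radius `1/(n+1)`
  set C : ℕ → ℕ → Set X := fun n m => ⋃ i ∈ Finset.range (m + 1),
    Metric.closedBall (u i) (1 / (n + 1)) with hC
  have hCclosed : ∀ n m, IsClosed (C n m) := fun n m =>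
    isClosed_biUnion_finset fun i _ => Metric.isClosed_closedBall
  have hCuniv : ∀ n, (⋃ m, C n m) = Set.univ := by
    intro n
    apply Set.eq_univ_of_forall
    intro x
    obtain ⟨i, hi⟩ := hu.exists_dist_lt x (by positivity : (0:ℝ) < 1 / (n + 1))
    refine Set.mem_iUnion.2 ⟨i, ?_⟩
    exact Set.mem_biUnion (Finset.self_mem_range_succ i) (Metric.mem_closedBall.2 hi.le)
  -- pick `N n` with complement of `C n (N n)` of small measure
  have key : ∀ n : ℕ, ∃ m : ℕ, μ (C n m)ᶜ < (2⁻¹ : ENNReal) ^ (n + 2) := by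
    intro n
    have hanti : Antitone fun m => (C n m)ᶜ := by
      intro a b hab
      refine Set.compl_subset_compl.2 ?_
      intro x hx
      obtain ⟨i, hi, hxi⟩ := Set.mem_iUnion₂.1 hx
      exact Set.mem_iUnion₂.2
        ⟨i, Finset.mem_range.2 ((Finset.mem_range.1 hi).trans_le (Nat.succ_le_succ hab)), hxi⟩
    have hint : (⋂ m, (C n m)ᶜ) = ∅ := by
      rw [← Set.compl_iUnion, hCuniv n, Set.compl_univ]
    have := tendsto_measure_iInter_atTop
      (μ := μ) (s := fun m => (C n m)ᶜ)
      (fun m => ((hCclosed n m).measurableSet.compl).nullMeasurableSet)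
      hanti ⟨0, measure_ne_top μ _⟩
    rw [hint] at this
    simp only [measure_empty] at this
    have hpos : (0 : ENNReal) < (2⁻¹ : ENNReal) ^ (n + 2) :=
      pos_iff_ne_zero.2 (pow_ne_zero _ (by norm_num))
    have := this.eventually_lt_const hpos
    obtain ⟨m, hm⟩ := this.exists
    exact ⟨m, hm⟩
  choose N hN using key
  refine ⟨⋂ n, C n (N n), ?_, ?_⟩
  · -- compact: closed and totally bounded in a complete space
    apply TotallyBounded.isCompact_of_isClosed
    · rw [Metric.totallyBounded_iff]
      intro ε hε
      obtain ⟨n, hn⟩ := exists_nat_one_div_lt hε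
      refine ⟨u '' (Finset.range (N n + 1) : Set ℕ), (Set.toFinite _).image u, ?_⟩
      intro x hx
      have hx' : x ∈ C n (N n) := Set.mem_iInter.1 hx n
      obtain ⟨i, hi, hxi⟩ := Set.mem_iUnion₂.1 hx'
      refine Set.mem_biUnion ⟨i, by simpa using hi, rfl⟩ ?_
      rw [Metric.mem_ball]
      calc dist x (u i) ≤ 1 / (n + 1) := Metric.mem_closedBall.1 hxi
        _ < ε := hn
    · exact isClosed_iInter fun n => hCclosed n (N n)
  · -- positive measure
    rcases eq_or_ne (μ (⋂ n, C n (N n))) 0 with h0 | h0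
    · exfalso
      have hcover : (1 : ENNReal) ≤ μ (⋂ n, C n (N n)) + μ (⋂ n, C n (N n))ᶜ := by
        rw [← measure_univ (μ := μ), ← Set.union_compl_self (⋂ n, C n (N n))]
        exact measure_union_le _ _
      have hcompl : μ (⋂ n, C n (N n))ᶜ ≤ ∑' n, (2⁻¹ : ENNReal) ^ (n + 2) := by
        rw [Set.compl_iInter]
        exact le_trans (measure_iUnion_le _) (ENNReal.tsum_le_tsum fun n => (hN n).le)
      have hsum : (∑' n, (2⁻¹ : ENNReal) ^ (n + 2)) = 2⁻¹ := by
        have : (∑' n : ℕ, (2⁻¹ : ENNReal) ^ (n + 2))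
            = (∑' n : ℕ, (2⁻¹ : ENNReal) ^ n) * (2⁻¹) ^ 2 := by
          rw [← ENNReal.tsum_mul_right]
          congr 1 with n
          rw [pow_add]
        rw [this, ENNReal.tsum_geometric, ENNReal.one_sub_inv_two, inv_inv, sq,
          ← mul_assoc, ENNReal.mul_inv_cancel two_ne_zero ENNReal.ofNat_ne_top, one_mul]
      have : (1 : ENNReal) ≤ 2⁻¹ := by
        calc (1 : ENNReal) ≤ μ (⋂ n, C n (N n)) + μ (⋂ n, C n (N n))ᶜ := hcover
          _ = μ (⋂ n, C n (N n))ᶜ := by rw [h0, zero_add]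
          _ ≤ 2⁻¹ := hsum ▸ hcompl
      have h2 : (2⁻¹ : ENNReal) < 1 := by
        rw [ENNReal.inv_lt_one]
        exact_mod_cast one_lt_two
      exact absurd this (not_le.2 h2)
    · exact pos_iff_ne_zero.2 h0

/-- A set `A` in a topological group is *Haar null* if there are a Borel set `B ⊇ A` and a
Borel probability measure `μ` such that `μ (g • B • h) = 0` for all `g, h`. -/
def HaarNull {G : Type*} [Group G] [MeasurableSpace G] (A : Set G) : Prop :=
  ∃ B : Set G, A ⊆ B ∧ MeasurableSet B ∧
    ∃ μ : Measure G, IsProbabilityMeasure μ ∧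
      ∀ g h : G, μ ((fun b => g * b * h) '' B) = 0

/-- A compact biter (a set that "bites" a translated piece of every compact set) is not
Haar null. -/
theorem stmt_0 {G : Type*} [Group G] [TopologicalSpace G] [IsTopologicalGroup G]
    [PolishSpace G] [MeasurableSpace G] [BorelSpace G] (A : Set G)
    (hA : ∀ K : Set G, IsCompact K → ∃ (U : Set G) (g h : G),
      IsOpen U ∧ (U ∩ K).Nonempty ∧ (fun x => g * x * h) '' (U ∩ K) ⊆ A) :
    ¬ HaarNull A := by
  rintro ⟨B, hAB, hBmeas, μ, hμprob, hμnull⟩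
  -- find a compact set of positive measure
  obtain ⟨K, hKcomp, hKpos⟩ := exists_isCompact_pos_measure μ
  -- shrink `K` to its "everywhere positive" part using a countable basis
  obtain ⟨b, hbcount, -, hbbasis⟩ := TopologicalSpace.exists_countable_basis G
  set bad : Set (Set G) := {v ∈ b | μ (v ∩ K) = 0} with hbad
  set W : Set G := ⋃₀ bad with hW
  have hWopen : IsOpen W := isOpen_sUnion fun v hv => hbbasis.isOpen hv.1
  have hKW : μ (K ∩ W) = 0 := by
    have : K ∩ W ⊆ ⋃ v ∈ bad, (v ∩ K) := by
      rintro x ⟨hxK, hxW⟩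
      obtain ⟨v, hv, hxv⟩ := hxW
      exact Set.mem_biUnion hv ⟨hxv, hxK⟩
    refine measure_mono_null this ?_
    exact (measure_biUnion_null_iff (hbcount.mono fun v hv => hv.1)).2 fun v hv => hv.2
  set K' : Set G := K \ W with hK'
  have hK'comp : IsCompact K' := hKcomp.diff hWopen
  have hK'pos : 0 < μ K' := by
    rcases eq_or_ne (μ K') 0 with h0 | h0
    · exfalso
      have : μ K ≤ μ K' + μ (K ∩ W) := by
        refine le_trans (measure_mono ?_) (measure_union_le _ _)
        intro x hx
        by_cases hxW : x ∈ W
        · exact Or.inr ⟨hx, hxW⟩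
        · exact Or.inl ⟨hx, hxW⟩
      rw [h0, hKW, add_zero] at this
      exact hKpos.ne' (nonpos_iff_eq_zero.1 this)
    · exact pos_iff_ne_zero.2 h0
  -- every open set meeting `K'` meets it in positive measure
  have hK'ev : ∀ U : Set G, IsOpen U → (U ∩ K').Nonempty → 0 < μ (U ∩ K') := by
    intro U hUopen ⟨x, hxU, hxK'⟩
    obtain ⟨v, hvb, hxv, hvU⟩ := hbbasis.exists_subset_of_mem_open hxU hUopen
    have hvK : μ (v ∩ K) ≠ 0 := by
      intro h0
      exact hxK'.2 ⟨v, ⟨hvb, h0⟩, hxv⟩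
    have hsub : v ∩ K ⊆ (U ∩ K') ∪ (K ∩ W) := by
      rintro y ⟨hyv, hyK⟩
      by_cases hyW : y ∈ W
      · exact Or.inr ⟨hyK, hyW⟩
      · exact Or.inl ⟨hvU hyv, hyK, hyW⟩
    rcases eq_or_ne (μ (U ∩ K')) 0 with h0 | h0
    · exfalso
      have : μ (v ∩ K) ≤ μ (U ∩ K') + μ (K ∩ W) :=
        le_trans (measure_mono hsub) (measure_union_le _ _)
      rw [h0, hKW, add_zero] at this
      exact hvK (nonpos_iff_eq_zero.1 this)
    · exact pos_iff_ne_zero.2 h0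
  -- apply the biting hypothesis to `K'`
  obtain ⟨U, g, h, hUopen, hUne, hUsub⟩ := hA K' hK'comp
  -- translate back: `U ∩ K' ⊆ g⁻¹ • B • h⁻¹`
  have hsub : U ∩ K' ⊆ (fun bb => g⁻¹ * bb * h⁻¹) '' B := by
    intro x hx
    refine ⟨g * x * h, hAB (hUsub ⟨x, hx, rfl⟩), ?_⟩
    group
  have := hμnull g⁻¹ h⁻¹
  have hle : μ (U ∩ K') ≤ μ ((fun bb => g⁻¹ * bb * h⁻¹) '' B) := measure_mono hsub
  rw [this] at hle
  exact absurd (nonpos_iff_eq_zero.1 hle) (hK'ev U hUopen hUne).ne'
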